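/- Let V be an n-dimensional vector space, let {b_1,…,b_n} and {a_1,…,a_n} be two bases of V, and let i ∈ {1,…,n−1}. Then there exists a bijection φ from the i-element subsets of [n] = {1,…,n} to the (n−i)-element subsets of [n] such that for every i-element subset I ⊆ [n], the set {b_k : k ∈ I} ∪ {a_j : j ∈ φ(I)} is a basis of V. -/

import Mathlib

open Finset

namespace Stmt9Aux

open Equiv Equiv.Perm Matrix Function

variable {R : Type*} [CommRing R]

/-- Strictly monotone enumeration of an `r`-element subset of `Fin n`. -/
def emb {n r : ℕ} (s : {s : Finset (Fin n) // s.card = r}) : Fin r → Fin n :=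
  fun t => s.1.orderEmbOfFin s.2 t

theorem emb_injective {n r : ℕ} (s : {s : Finset (Fin n) // s.card = r}) :
    Function.Injective (emb s) := (s.1.orderEmbOfFin s.2).injective

theorem emb_mem {n r : ℕ} (s : {s : Finset (Fin n) // s.card = r}) (t : Fin r) :
    emb s t ∈ s.1 := s.1.orderEmbOfFin_mem s.2 t

theorem range_emb {n r : ℕ} (s : {s : Finset (Fin n) // s.card = r}) :
    Set.range (emb s) = ↑s.1 := s.1.range_orderEmbOfFin s.2

theorem det_mul_aux' {n r : ℕ} {M : Matrix (Fin r) (Fin n) R} {N : Matrix (Fin n) (Fin r) R}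
    {p : Fin r → Fin n} (H : ¬Function.Injective p) :
    (∑ σ : Perm (Fin r), ((sign σ : ℤ) : R) * ∏ x, M (σ x) (p x) * N (p x) x) = 0 := by
  obtain ⟨i, j, hpij, hij⟩ : ∃ i j, p i = p j ∧ i ≠ j := by
    rw [Function.Injective] at H
    push_neg at H
    obtain ⟨i, j, h1, h2⟩ := H
    exact ⟨i, j, h1, h2⟩
  exact
    sum_involution (fun σ _ => σ * Equiv.swap i j)
      (fun σ _ => by
        have : (∏ x, M (σ x) (p x)) = ∏ x, M ((σ * Equiv.swap i j) x) (p x) :=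
          Fintype.prod_equiv (Equiv.swap i j) _ _ (by simp [apply_swap_eq_self hpij])
        simp [this, sign_swap hij, -sign_swap', prod_mul_distrib])
      (fun σ _ _ => (not_congr mul_swap_eq_iff).mpr hij) (fun _ _ => mem_univ _) fun σ _ =>
      mul_swap_involutive i j σ

theorem sum_sum_perm_eq_det_mul {m : ℕ} (M N : Matrix (Fin m) (Fin m) R) :
    ∑ τ : Perm (Fin m), ∑ σ : Perm (Fin m),
      ((sign σ : ℤ) : R) * ∏ x, M (σ x) (τ x) * N (τ x) x = det M * det N := by
  rw [← det_mul]
  calc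
    ∑ τ : Perm (Fin m), ∑ σ : Perm (Fin m),
        ((sign σ : ℤ) : R) * ∏ x, M (σ x) (τ x) * N (τ x) x
      = ∑ p : Fin m → Fin m with Function.Bijective p, ∑ σ : Perm (Fin m),
          ((sign σ : ℤ) : R) * ∏ x, M (σ x) (p x) * N (p x) x :=
      (sum_bij (fun p h => Equiv.ofBijective p (mem_filter.1 h).2) (fun _ _ => mem_univ _)
        (fun _ _ _ _ h => by injection h)
        (fun b _ => ⟨b, mem_filter.2 ⟨mem_univ _, b.bijective⟩, coe_fn_injective rfl⟩)
        fun _ _ => rfl).symm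
    _ = ∑ p : Fin m → Fin m, ∑ σ : Perm (Fin m),
          ((sign σ : ℤ) : R) * ∏ x, M (σ x) (p x) * N (p x) x := by
      refine sum_subset (filter_subset _ _) fun f _ hbij => det_mul_aux ?_
      simpa only [true_and, mem_filter, mem_univ] using hbij
    _ = det (M * N) := by
      symm
      simp only [det_apply', Matrix.mul_apply, prod_univ_sum, mul_sum, Fintype.piFinset_univ]
      rw [Finset.sum_comm]

/-- Cauchy–Binet formula. -/
theorem cauchyBinet {n r : ℕ} (P : Matrix (Fin r) (Fin n) R) (Q : Matrix (Fin n) (Fin r) R) :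
    det (P * Q) = ∑ s : {s : Finset (Fin n) // s.card = r},
      det (P.submatrix id (emb s)) * det (Q.submatrix (emb s) id) := by
  classical
  have h1 : det (P * Q) = ∑ p : Fin r → Fin n, ∑ σ : Perm (Fin r),
      ((sign σ : ℤ) : R) * ∏ x, P (σ x) (p x) * Q (p x) x := by
    simp only [det_apply', Matrix.mul_apply, prod_univ_sum, mul_sum, Fintype.piFinset_univ]
    rw [Finset.sum_comm]
  have h2 : ∑ p : Fin r → Fin n, ∑ σ : Perm (Fin r),
        ((sign σ : ℤ) : R) * ∏ x, P (σ x) (p x) * Q (p x) x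
      = ∑ p : Fin r → Fin n with Function.Injective p, ∑ σ : Perm (Fin r),
        ((sign σ : ℤ) : R) * ∏ x, P (σ x) (p x) * Q (p x) x := by
    refine (sum_subset (filter_subset _ _) fun f _ hinj => det_mul_aux' ?_).symm
    simpa only [true_and, mem_filter, mem_univ] using hinj
  have h3 : ∑ p : Fin r → Fin n with Function.Injective p, ∑ σ : Perm (Fin r),
        ((sign σ : ℤ) : R) * ∏ x, P (σ x) (p x) * Q (p x) x
      = ∑ p : {p : Fin r → Fin n // Function.Injective p}, ∑ σ : Perm (Fin r),
        ((sign σ : ℤ) : R) * ∏ x, P (σ x) (p.1 x) * Q (p.1 x) x :=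
    Finset.sum_subtype _ (by simp) _
  have key : ∀ (s : {s : Finset (Fin n) // s.card = r}) (τ : Perm (Fin r)),
      Function.Injective (emb s ∘ τ) := fun s τ => (emb_injective s).comp τ.injective
  have hbij : Function.Bijective
      (fun x : {s : Finset (Fin n) // s.card = r} × Perm (Fin r) =>
        (⟨emb x.1 ∘ x.2, key x.1 x.2⟩ : {p : Fin r → Fin n // Function.Injective p})) := by
    constructor
    · rintro ⟨s, τ⟩ ⟨s', τ'⟩ h
      rw [Subtype.mk.injEq] at h
      have hss' : s = s' := by
        have hr : Set.range (emb s ∘ ⇑τ) = Set.range (emb s' ∘ ⇑τ') := by rw [h]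
        rw [Set.range_comp, Set.range_comp, Equiv.range_eq_univ, Equiv.range_eq_univ,
          Set.image_univ, Set.image_univ, range_emb, range_emb] at hr
        exact Subtype.ext (Finset.coe_injective hr)
      subst hss'
      have hττ' : τ = τ' :=
        Equiv.coe_fn_injective (funext fun t => emb_injective s (congrFun h t))
      rw [hττ']
    · rintro ⟨p, hp⟩
      have hcard : (Finset.univ.image p).card = r := by
        rw [Finset.card_image_of_injective _ hp, card_univ, Fintype.card_fin]
      set s : {s : Finset (Fin n) // s.card = r} := ⟨Finset.univ.image p, hcard⟩ with hs
      have hmem : ∀ t, p t ∈ s.1 := fun t => Finset.mem_image_of_mem p (mem_univ t)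
      have hg : Function.Injective
          (fun t => (s.1.orderIsoOfFin s.2).symm ⟨p t, hmem t⟩) := by
        intro t u htu
        apply hp
        have := congrArg (fun z => ((s.1.orderIsoOfFin s.2) z : Fin n)) htu
        simpa using this
      refine ⟨⟨s, Equiv.ofBijective _ ((Finite.injective_iff_bijective).1 hg)⟩, ?_⟩
      apply Subtype.ext
      funext t
      show emb s ((s.1.orderIsoOfFin s.2).symm ⟨p t, hmem t⟩) = p t
      rw [emb, ← Finset.coe_orderIsoOfFin_apply]
      simp
  have h4 : ∑ p : {p : Fin r → Fin n // Function.Injective p}, ∑ σ : Perm (Fin r),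
        ((sign σ : ℤ) : R) * ∏ x, P (σ x) (p.1 x) * Q (p.1 x) x
      = ∑ y : {s : Finset (Fin n) // s.card = r} × Perm (Fin r), ∑ σ : Perm (Fin r),
        ((sign σ : ℤ) : R) * ∏ x, P (σ x) ((emb y.1 ∘ y.2) x) * Q ((emb y.1 ∘ y.2) x) x :=
    (Fintype.sum_bijective _ hbij _ _ fun x => rfl).symm
  rw [h1, h2, h3, h4, Fintype.sum_prod_type]
  refine Finset.sum_congr rfl fun s _ => ?_
  exact sum_sum_perm_eq_det_mul (P.submatrix id (emb s)) (Q.submatrix (emb s) id)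

variable {K : Type*} [Field K]

theorem exists_good_perm {n r : ℕ} (A : Matrix (Fin n) (Fin n) K) (hA : IsUnit A.det) :
    ∃ ψ : Equiv.Perm {s : Finset (Fin n) // s.card = r},
      ∀ s, det (A.submatrix (emb s) (emb (ψ s))) ≠ 0 := by
  classical
  set S := {s : Finset (Fin n) // s.card = r}
  set C : Matrix S S K := Matrix.of fun s t => det (A.submatrix (emb s) (emb t)) with hC
  set C' : Matrix S S K := Matrix.of fun s t => det (A⁻¹.submatrix (emb s) (emb t)) with hC'
  have hCC' : C * C' = 1 := by
    ext s t
    have h1 : (C * C') s t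
        = det ((A.submatrix (emb s) id) * (A⁻¹.submatrix id (emb t))) := by
      rw [cauchyBinet]
      simp only [Matrix.mul_apply, hC, hC', of_apply, submatrix_submatrix, Function.comp_id,
        Function.id_comp]
      convert rfl
    have h2 : (A.submatrix (emb s) id) * (A⁻¹.submatrix id (emb t))
        = (1 : Matrix (Fin n) (Fin n) K).submatrix (emb s) (emb t) := by
      rw [← Matrix.mul_nonsing_inv A hA]
      ext u v
      simp [Matrix.mul_apply]
    rw [h1, h2]
    by_cases hst : s = t
    · subst hst
      have h3 : (1 : Matrix (Fin n) (Fin n) K).submatrix (emb s) (emb s) = 1 := by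
        ext u v
        simp only [submatrix_apply, Matrix.one_apply]
        by_cases h : u = v
        · simp [h]
        · rw [if_neg (fun hc => h (emb_injective s hc)), if_neg h]
      rw [h3, det_one, Matrix.one_apply_eq]
    · obtain ⟨x, hxs, hxt⟩ : ∃ x ∈ s.1, x ∉ t.1 := by
        by_contra h
        push_neg at h
        exact hst (Subtype.ext (Finset.eq_of_subset_of_card_le h (by rw [s.2, t.2])))
      obtain ⟨u, hu⟩ : ∃ u, emb s u = x := by
        have : x ∈ Set.range (emb s) := by rw [range_emb]; exact_mod_cast hxs
        exact this
      have h4 : det ((1 : Matrix (Fin n) (Fin n) K).submatrix (emb s) (emb t)) = 0 := by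
        apply det_eq_zero_of_row_eq_zero u
        intro v
        simp only [submatrix_apply, Matrix.one_apply]
        rw [if_neg]
        intro hc
        exact hxt (hu ▸ hc ▸ emb_mem t v)
      rw [h4, Matrix.one_apply_ne hst]
  have hdet : det C ≠ 0 := by
    intro h
    have h5 := congrArg det hCC'
    rw [det_mul, h, zero_mul, det_one] at h5
    exact zero_ne_one h5
  have hexists : ∃ σ : Equiv.Perm S, ∀ x, C (σ x) x ≠ 0 := by
    by_contra h
    push_neg at h
    apply hdet
    rw [det_apply']
    apply Finset.sum_eq_zero
    intro σ _
    obtain ⟨x, hx⟩ := h σ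
    rw [Finset.prod_eq_zero (f := fun i => C (σ i) i) (mem_univ x) hx, mul_zero]
  obtain ⟨σ, hσ⟩ := hexists
  refine ⟨σ⁻¹, fun s => ?_⟩
  have := hσ (σ⁻¹ s)
  simpa [hC] using this

end Stmt9Aux

/-- Lemma: given two bases `{b_1,…,b_n}` and `{a_1,…,a_n}` of an `n`-dimensional vector
space `V` and `1 ≤ i ≤ n−1`, there is a bijection `φ` from the `i`-element subsets of
`[n]` to the `(n−i)`-element subsets of `[n]` such that for every `i`-element subset `I`,
the set `{b_k : k ∈ I} ∪ {a_j : j ∈ φ(I)}` is a basis of `V`. -/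
theorem stmt9 (K V : Type*) [Field K] [AddCommGroup V] [Module K V]
    (n : ℕ) (b a : Module.Basis (Fin n) K V)
    (i : ℕ) (hi1 : 1 ≤ i) (hi2 : i ≤ n - 1) :
    ∃ φ : Finset (Fin n) → Finset (Fin n),
      Set.BijOn φ {I : Finset (Fin n) | I.card = i} {J : Finset (Fin n) | J.card = n - i} ∧
      ∀ I : Finset (Fin n), I.card = i →
        LinearIndependent K
          ((↑) : ((⇑b '' (I : Set (Fin n))) ∪ (⇑a '' ((φ I : Set (Fin n)))) : Set V) → V) ∧
        Submodule.span K ((⇑b '' (I : Set (Fin n))) ∪ (⇑a '' ((φ I : Set (Fin n))))) = ⊤ := by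
  classical
  have hin : i < n := by omega
  set r := n - i with hr
  set A : Matrix (Fin n) (Fin n) K := b.toMatrix ⇑a with hA
  have hAdet : IsUnit A.det := by
    rw [hA, ← Module.Basis.det_apply]
    exact b.isUnit_det a
  obtain ⟨ψ, hψ⟩ := Stmt9Aux.exists_good_perm (r := r) A hAdet
  have hcompl : ∀ I : Finset (Fin n), I.card = i → Iᶜ.card = r := fun I hI => by
    rw [Finset.card_compl, hI, Fintype.card_fin]
  set φ : Finset (Fin n) → Finset (Fin n) := fun I =>
    if h : I.card = i then (ψ ⟨Iᶜ, hcompl I h⟩).1 else Iᶜ with hφ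
  have hφI : ∀ I (h : I.card = i), φ I = (ψ ⟨Iᶜ, hcompl I h⟩).1 := fun I h => by
    simp only [hφ, dif_pos h]
  refine ⟨φ, ⟨⟨?_, ?_, ?_⟩, ?_⟩⟩
  · intro I hI
    have hI' : I.card = i := hI
    show (φ I).card = n - i
    rw [hφI I hI']
    exact (ψ ⟨Iᶜ, hcompl I hI'⟩).2
  · intro I1 h1 I2 h2 heq
    rw [hφI I1 h1, hφI I2 h2] at heq
    have h3 := ψ.injective (Subtype.coe_injective heq)
    have h4 : I1ᶜ = I2ᶜ := congrArg Subtype.val h3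
    simpa using congrArg (·ᶜ) h4
  · intro J hJ
    have hJ' : J.card = r := hJ
    refine ⟨((ψ.symm ⟨J, hJ'⟩).1)ᶜ, ?_, ?_⟩
    · show ((ψ.symm ⟨J, hJ'⟩).1)ᶜ.card = i
      rw [Finset.card_compl, (ψ.symm ⟨J, hJ'⟩).2, Fintype.card_fin]
      omega
    · have hc : ((ψ.symm ⟨J, hJ'⟩).1)ᶜ.card = i := by
        rw [Finset.card_compl, (ψ.symm ⟨J, hJ'⟩).2, Fintype.card_fin]
        omega
      rw [hφI _ hc]
      have h5 : (⟨(((ψ.symm ⟨J, hJ'⟩).1)ᶜ)ᶜ, hcompl _ hc⟩ :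
          {s : Finset (Fin n) // s.card = r}) = ψ.symm ⟨J, hJ'⟩ :=
        Subtype.ext (compl_compl _)
      rw [h5, Equiv.apply_symm_apply]
  · intro I hI
    set sI : {s : Finset (Fin n) // s.card = r} := ⟨Iᶜ, hcompl I hI⟩ with hsI
    set sJ := ψ sI with hsJ
    have hφIJ : φ I = sJ.1 := hφI I hI
    have hd : Matrix.det (A.submatrix (Stmt9Aux.emb sI) (Stmt9Aux.emb sJ)) ≠ 0 := hψ sI
    set embI : Fin i → Fin n := fun t => I.orderEmbOfFin hI t with hembI
    set w : Fin i ⊕ Fin r → V :=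
      Sum.elim (fun t => b (embI t)) (fun t => a (Stmt9Aux.emb sJ t)) with hw
    have hne : ∀ u v, embI u ≠ Stmt9Aux.emb sI v := by
      intro u v h
      have h1 : embI u ∈ I := I.orderEmbOfFin_mem hI u
      have h2 : Stmt9Aux.emb sI v ∈ Iᶜ := Stmt9Aux.emb_mem sI v
      rw [Finset.mem_compl] at h2
      exact h2 (h ▸ h1)
    have hinj : Function.Injective (Sum.elim embI (Stmt9Aux.emb sI)) :=
      Function.Injective.sumElim (I.orderEmbOfFin hI).injective
        (Stmt9Aux.emb_injective sI) hne
    have hbij : Function.Bijective (Sum.elim embI (Stmt9Aux.emb sI)) := by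
      rw [Fintype.bijective_iff_injective_and_card]
      refine ⟨hinj, ?_⟩
      simp only [Fintype.card_sum, Fintype.card_fin]
      omega
    set e : Fin n ≃ Fin i ⊕ Fin r := (Equiv.ofBijective _ hbij).symm with he
    set b' := b.reindex e with hb'
    have hrepr : ∀ (x : Fin i ⊕ Fin r) (y : Fin i ⊕ Fin r),
        b'.toMatrix w x y = b.repr (w y) (Sum.elim embI (Stmt9Aux.emb sI) x) := by
      intro x y
      rw [Module.Basis.toMatrix_apply, hb', Module.Basis.repr_reindex, Finsupp.mapDomain_equiv_apply]
      rfl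
    have hM : b'.toMatrix w = Matrix.fromBlocks 1 (A.submatrix embI (Stmt9Aux.emb sJ)) 0
        (A.submatrix (Stmt9Aux.emb sI) (Stmt9Aux.emb sJ)) := by
      ext x y
      rcases x with u | u <;> rcases y with t | t
      · rw [hrepr]
        simp only [Sum.elim_inl, hw, Module.Basis.repr_self, Finsupp.single_apply,
          Matrix.fromBlocks_apply₁₁, Matrix.one_apply]
        by_cases h : t = u
        · simp [h]
        · rw [if_neg (fun hc => h ((I.orderEmbOfFin hI).injective hc)), if_neg (Ne.symm h)]
      · rw [hrepr]
        simp only [Sum.elim_inl, Sum.elim_inr, hw, Matrix.fromBlocks_apply₁₂,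
          Matrix.submatrix_apply, hA, Module.Basis.toMatrix_apply]
      · rw [hrepr]
        simp only [Sum.elim_inl, Sum.elim_inr, hw, Module.Basis.repr_self, Finsupp.single_apply,
          Matrix.fromBlocks_apply₂₁, Matrix.zero_apply]
        rw [if_neg (fun hc => hne t u hc)]
      · rw [hrepr]
        simp only [Sum.elim_inr, hw, Matrix.fromBlocks_apply₂₂,
          Matrix.submatrix_apply, hA, Module.Basis.toMatrix_apply]
    have hdet' : IsUnit (b'.det w) := by
      rw [Module.Basis.det_apply, hM, Matrix.det_fromBlocks_zero₂₁, Matrix.det_one, one_mul]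
      exact isUnit_iff_ne_zero.mpr hd
    obtain ⟨hli, hsp⟩ := (Module.Basis.is_basis_iff_det b').mpr hdet'
    have hset : (⇑b '' (I : Set (Fin n))) ∪ (⇑a '' ((φ I : Set (Fin n)))) = Set.range w := by
      rw [hw, Set.Sum.elim_range, hφIJ]
      congr 1
      · rw [show (fun t => b (embI t)) = ⇑b ∘ embI from rfl, Set.range_comp,
          show Set.range embI = ↑I from I.range_orderEmbOfFin hI]
      · rw [show (fun t => a (Stmt9Aux.emb sJ t)) = ⇑a ∘ Stmt9Aux.emb sJ from rfl,
          Set.range_comp, Stmt9Aux.range_emb]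
    constructor
    · rw [show ((⇑b '' (I : Set (Fin n))) ∪ (⇑a '' ((φ I : Set (Fin n)))) : Set V)
        = Set.range w from hset]
      exact LinearIndependent.linearIndepOn_id hli
    · rw [hset]
      exact hsp
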